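/- arXiv:2006.06276 — 5 statements merged into one kernel-verified Lean document; each statement's English description precedes it below -/
import Mathlib

section
/- Equivalence of the regularized function ψ with f (Definition 3.1 and the following discussion): Let p ≥ 1, q > 0 and let f : (0,∞) → (0,∞) satisfy (aInc)_p with constant L_p (f(s)/s^p ≤ L_p f(t)/t^p for 0 < s ≤ t) and (aDec)_q with constant L_q (f(t)/t^q ≤ L_q f(s)/s^q for 0 < s ≤ t). Define ψ(t) := ∫₀ᵗ τ^{p−1} sup_{s∈(0,τ]} (f(s)/s^p) dτ for t > 0. Then ψ is finite and for all t > 0: ((2^p − 1)/(p L_q 2^q)) f(t) ≤ ψ(t) ≤ (L_p/p) f(t). -/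
open Set MeasureTheory

/-- **Definition 3.1 and following discussion**: the regularization
`ψ(t) = ∫₀ᵗ τ^{p-1} sup_{s ∈ (0,τ]} f(s)/s^p dτ` of a function `f` satisfying (aInc)_p and
(aDec)_q is finite and comparable to `f`:
`((2^p - 1)/(p L_q 2^q)) f(t) ≤ ψ(t) ≤ (L_p/p) f(t)`. -/
theorem psi_equivalent_to_f (p q Lp Lq : ℝ) (hp : 1 ≤ p) (hq : 0 < q)
    (hLp : 1 ≤ Lp) (hLq : 1 ≤ Lq) (f : ℝ → ℝ)
    (hfpos : ∀ t : ℝ, 0 < t → 0 < f t)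
    (hinc : ∀ s t : ℝ, 0 < s → s ≤ t → f s / s ^ p ≤ Lp * (f t / t ^ p))
    (hdec : ∀ s t : ℝ, 0 < s → s ≤ t → f t / t ^ q ≤ Lq * (f s / s ^ q)) :
    ∀ t : ℝ, 0 < t →
      IntegrableOn
        (fun τ => τ ^ (p - 1) * sSup ((fun s => f s / s ^ p) '' Ioc (0:ℝ) τ))
        (Ioc (0:ℝ) t) ∧
      ((2 ^ p - 1) / (p * Lq * 2 ^ q)) * f t
        ≤ ∫ τ in Ioc (0:ℝ) t, τ ^ (p - 1) * sSup ((fun s => f s / s ^ p) '' Ioc (0:ℝ) τ) ∧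
      (∫ τ in Ioc (0:ℝ) t, τ ^ (p - 1) * sSup ((fun s => f s / s ^ p) '' Ioc (0:ℝ) τ))
        ≤ (Lp / p) * f t := by
  have hp0 : 0 < p := lt_of_lt_of_le one_pos hp
  have hLq0 : 0 < Lq := lt_of_lt_of_le one_pos hLq
  set F : ℝ → ℝ := fun s => f s / s ^ p with hFdef
  set g : ℝ → ℝ := fun τ => sSup (F '' Ioc (0:ℝ) τ) with hgdef
  have hFpos : ∀ s : ℝ, 0 < s → 0 < F s := fun s hs =>
    div_pos (hfpos s hs) (Real.rpow_pos_of_pos hs p)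
  have hbdd : ∀ τ : ℝ, 0 < τ → ∀ x ∈ F '' Ioc (0:ℝ) τ, x ≤ Lp * (f τ / τ ^ p) := by
    rintro τ hτ x ⟨s, hs, rfl⟩
    exact hinc s τ hs.1 hs.2
  have hBdd : ∀ τ : ℝ, 0 < τ → BddAbove (F '' Ioc (0:ℝ) τ) := fun τ hτ =>
    ⟨Lp * (f τ / τ ^ p), fun x hx => hbdd τ hτ x hx⟩
  have hne : ∀ τ : ℝ, 0 < τ → (F '' Ioc (0:ℝ) τ).Nonempty := fun τ hτ =>
    (Set.nonempty_Ioc.2 hτ).image F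
  have hgge : ∀ s τ : ℝ, 0 < s → s ≤ τ → F s ≤ g τ := fun s τ hs hsτ =>
    le_csSup (hBdd τ (hs.trans_le hsτ)) (Set.mem_image_of_mem F ⟨hs, hsτ⟩)
  have hgpos : ∀ τ : ℝ, 0 < τ → 0 < g τ := fun τ hτ =>
    lt_of_lt_of_le (hFpos τ hτ) (hgge τ τ hτ le_rfl)
  have hgmono : Monotone g := by
    intro a b hab
    rcases le_or_gt a 0 with ha | ha
    · have hea : F '' Ioc (0:ℝ) a = ∅ := by
        rw [Set.image_eq_empty, Set.Ioc_eq_empty (not_lt.2 ha)]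
      have hga : g a = 0 := by rw [hgdef]; simp [hea]
      rcases le_or_gt b 0 with hb | hb
      · have heb : F '' Ioc (0:ℝ) b = ∅ := by
          rw [Set.image_eq_empty, Set.Ioc_eq_empty (not_lt.2 hb)]
        have : g b = 0 := by rw [hgdef]; simp [heb]
        rw [hga, this]
      · rw [hga]; exact (hgpos b hb).le
    · exact csSup_le_csSup (hBdd b (ha.trans_le hab)) (hne a ha)
        (Set.image_mono (Set.Ioc_subset_Ioc le_rfl hab))
  have hgmeas : Measurable g := hgmono.measurable
  have hmeas : Measurable fun τ : ℝ => τ ^ (p - 1) * g τ :=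
    ((by fun_prop : Measurable fun τ : ℝ => τ ^ (p - 1))).mul hgmeas
  intro t ht
  have htp : (0:ℝ) < t ^ p := Real.rpow_pos_of_pos ht p
  -- pointwise bounds on Ioc 0 t
  have hgle : ∀ τ ∈ Ioc (0:ℝ) t, g τ ≤ Lp * (f t / t ^ p) := by
    intro τ hτ
    refine csSup_le (hne τ hτ.1) ?_
    rintro x ⟨s, hs, rfl⟩
    exact hinc s t hs.1 (hs.2.trans hτ.2)
  have hnn : ∀ τ ∈ Ioc (0:ℝ) t, 0 ≤ τ ^ (p - 1) * g τ := fun τ hτ =>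
    mul_nonneg (Real.rpow_nonneg hτ.1.le _) (hgpos τ hτ.1).le
  -- Integrability
  have hint : IntegrableOn (fun τ : ℝ => τ ^ (p - 1) * g τ) (Ioc (0:ℝ) t) := by
    refine Integrable.mono' (g := fun _ => t ^ (p - 1) * (Lp * (f t / t ^ p)))
      (integrableOn_const measure_Ioc_lt_top.ne) hmeas.aestronglyMeasurable ?_
    filter_upwards [ae_restrict_mem measurableSet_Ioc] with τ hτ
    rw [Real.norm_eq_abs, abs_of_nonneg (hnn τ hτ)]
    have h1 : τ ^ (p - 1) ≤ t ^ (p - 1) :=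
      Real.rpow_le_rpow hτ.1.le hτ.2 (by linarith)
    have h2 : g τ ≤ Lp * (f t / t ^ p) := hgle τ hτ
    have hLpft : 0 ≤ Lp * (f t / t ^ p) :=
      mul_nonneg (by linarith) (div_nonneg (hfpos t ht).le htp.le)
    exact mul_le_mul h1 h2 (hgpos τ hτ.1).le (Real.rpow_nonneg ht.le _)
  refine ⟨hint, ?_, ?_⟩
  · -- lower bound
    have ht2 : (0:ℝ) < t / 2 := by linarith
    have h2q : (0:ℝ) < (2:ℝ) ^ q := Real.rpow_pos_of_pos two_pos q
    have h2p : (0:ℝ) < (2:ℝ) ^ p := Real.rpow_pos_of_pos two_pos p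
    have ht2p : (0:ℝ) < (t / 2) ^ p := Real.rpow_pos_of_pos ht2 p
    set c : ℝ := f t / (Lq * 2 ^ q) / (t / 2) ^ p with hcdef
    have hc0 : 0 ≤ c :=
      div_nonneg (div_nonneg (hfpos t ht).le (by positivity)) ht2p.le
    -- f(t/2) ≥ f t / (Lq * 2^q)
    have hdiv : (t / 2) ^ q = t ^ q / 2 ^ q := Real.div_rpow ht.le (by norm_num) q
    have hft2 : f t / (Lq * 2 ^ q) ≤ f (t / 2) := by
      have h := hdec (t / 2) t ht2 (by linarith)
      have htq : (0:ℝ) < t ^ q := Real.rpow_pos_of_pos ht q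
      rw [hdiv] at h
      have h' : f t ≤ Lq * (f (t / 2) / (t ^ q / 2 ^ q)) * t ^ q := by
        rw [div_le_iff₀ htq] at h; exact h
      have heq : Lq * (f (t / 2) / (t ^ q / 2 ^ q)) * t ^ q = f (t / 2) * (Lq * 2 ^ q) := by
        field_simp
      rw [div_le_iff₀ (by positivity)]
      linarith [heq ▸ h']
    -- g τ ≥ c for τ in Ioc (t/2) t
    have hglow : ∀ τ ∈ Ioc (t / 2) t, c ≤ g τ := by
      intro τ hτ
      refine le_trans ?_ (hgge (t / 2) τ ht2 hτ.1.le)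
      show f t / (Lq * 2 ^ q) / (t / 2) ^ p ≤ f (t / 2) / (t / 2) ^ p
      gcongr
    have hsubset : Ioc (t / 2) t ⊆ Ioc (0:ℝ) t := Ioc_subset_Ioc (by linarith) le_rfl
    have hintsub : IntegrableOn (fun τ : ℝ => τ ^ (p - 1) * g τ) (Ioc (t / 2) t) :=
      hint.mono_set hsubset
    have hsub : (∫ τ in Ioc (t / 2) t, τ ^ (p - 1) * g τ)
        ≤ ∫ τ in Ioc (0:ℝ) t, τ ^ (p - 1) * g τ := by
      refine setIntegral_mono_set hint ?_ hsubset.eventuallyLE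
      filter_upwards [ae_restrict_mem measurableSet_Ioc] with τ hτ
      exact hnn τ hτ
    have hc_int : IntegrableOn (fun τ : ℝ => c * τ ^ (p - 1)) (Ioc (t / 2) t) := by
      rw [← intervalIntegrable_iff_integrableOn_Ioc_of_le (by linarith : t / 2 ≤ t)]
      exact (intervalIntegral.intervalIntegrable_rpow' (by linarith)).const_mul _
    have hlb : (∫ τ in Ioc (t / 2) t, c * τ ^ (p - 1))
        ≤ ∫ τ in Ioc (t / 2) t, τ ^ (p - 1) * g τ := by
      refine setIntegral_mono_on hc_int hintsub measurableSet_Ioc ?_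
      intro τ hτ
      rw [mul_comm c]
      exact mul_le_mul_of_nonneg_left (hglow τ hτ)
        (Real.rpow_nonneg (le_of_lt (ht2.trans hτ.1)) _)
    have hcalc : (∫ τ in Ioc (t / 2) t, c * τ ^ (p - 1))
        = c * ((t ^ p - (t / 2) ^ p) / p) := by
      rw [← intervalIntegral.integral_of_le (by linarith : t / 2 ≤ t),
        intervalIntegral.integral_const_mul, integral_rpow (Or.inl (by linarith))]
      rw [sub_add_cancel]
    have hdivp : (t / 2) ^ p = t ^ p / 2 ^ p := Real.div_rpow ht.le (by norm_num) p
    have hfinal : c * ((t ^ p - (t / 2) ^ p) / p) = (2 ^ p - 1) / (p * Lq * 2 ^ q) * f t := by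
      rw [hcdef, hdivp]
      have h1 : t ^ p ≠ 0 := ne_of_gt htp
      have h2 : (2:ℝ) ^ p ≠ 0 := ne_of_gt h2p
      have h3 : (2:ℝ) ^ q ≠ 0 := ne_of_gt h2q
      field_simp
    calc (2 ^ p - 1) / (p * Lq * 2 ^ q) * f t = c * ((t ^ p - (t / 2) ^ p) / p) := hfinal.symm
      _ = ∫ τ in Ioc (t / 2) t, c * τ ^ (p - 1) := hcalc.symm
      _ ≤ ∫ τ in Ioc (t / 2) t, τ ^ (p - 1) * g τ := hlb
      _ ≤ ∫ τ in Ioc (0:ℝ) t, τ ^ (p - 1) * g τ := hsub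
  · -- upper bound
    have hint2 : IntegrableOn (fun τ : ℝ => Lp * (f t / t ^ p) * τ ^ (p - 1)) (Ioc (0:ℝ) t) := by
      rw [← intervalIntegrable_iff_integrableOn_Ioc_of_le ht.le]
      exact (intervalIntegral.intervalIntegrable_rpow' (by linarith)).const_mul _
    have hle : (∫ τ in Ioc (0:ℝ) t, τ ^ (p - 1) * g τ)
        ≤ ∫ τ in Ioc (0:ℝ) t, Lp * (f t / t ^ p) * τ ^ (p - 1) := by
      refine setIntegral_mono_on hint hint2 measurableSet_Ioc ?_
      intro τ hτ
      rw [mul_comm (Lp * (f t / t ^ p))]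
      exact mul_le_mul_of_nonneg_left (hgle τ hτ) (Real.rpow_nonneg hτ.1.le _)
    have hcalc : (∫ τ in Ioc (0:ℝ) t, Lp * (f t / t ^ p) * τ ^ (p - 1)) = Lp / p * f t := by
      rw [← intervalIntegral.integral_of_le ht.le, intervalIntegral.integral_const_mul,
        integral_rpow (Or.inl (by linarith))]
      rw [sub_add_cancel, Real.zero_rpow (ne_of_gt hp0)]
      field_simp
      ring
    exact hle.trans_eq hcalc
end

section
/- Iteration lemma for small exponents (implicit in the proof of Theorem 3.2): Let Q ∈ (0,1), b ≥ 0, c > 0, A > 0, R > 0, and let (Λ_k)_{k≥1} be a sequence of real numbers with Λ_k ≥ R for every k. If Λ_k ≥ c · 2^{bk} · A · Λ_{k+1}^Q for every k ≥ 1, then Λ₁ ≥ (cA)^{1/(1−Q)}. -/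
open Set

/-- **Iteration lemma** (implicit in the proof of Theorem 3.2): if `Λ_k ≥ R > 0` and
`Λ_k ≥ c 2^{bk} A Λ_{k+1}^Q` for all `k ≥ 1` with `Q ∈ (0,1)`, `b ≥ 0`, `c, A > 0`,
then `Λ₁ ≥ (cA)^{1/(1-Q)}`. -/
theorem iteration_lemma (Q b c A R : ℝ) (hQ : Q ∈ Ioo (0:ℝ) 1) (hb : 0 ≤ b)
    (hc : 0 < c) (hA : 0 < A) (hR : 0 < R) (Λ : ℕ → ℝ)
    (hlow : ∀ k : ℕ, 1 ≤ k → R ≤ Λ k)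
    (hrec : ∀ k : ℕ, 1 ≤ k → c * 2 ^ (b * (k : ℝ)) * A * Λ (k + 1) ^ Q ≤ Λ k) :
    (c * A) ^ (1 / (1 - Q)) ≤ Λ 1 := by
  obtain ⟨hQ0, hQ1⟩ := hQ
  have hcA : 0 < c * A := mul_pos hc hA
  have h1Q : 0 < 1 - Q := by linarith
  have hLpos : ∀ k : ℕ, 1 ≤ k → 0 < Λ k := fun k hk => lt_of_lt_of_le hR (hlow k hk)
  -- chain inequality without the 2^{bk} factor
  have hchain : ∀ k : ℕ, 1 ≤ k → c * A * Λ (k + 1) ^ Q ≤ Λ k := by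
    intro k hk
    have h2 : (1 : ℝ) ≤ 2 ^ (b * (k : ℝ)) := by
      apply Real.one_le_rpow (by norm_num)
      positivity
    have hp : 0 < Λ (k + 1) ^ Q := Real.rpow_pos_of_pos (hLpos (k+1) (by omega)) Q
    calc c * A * Λ (k + 1) ^ Q = c * 1 * A * Λ (k + 1) ^ Q := by ring
      _ ≤ c * 2 ^ (b * (k : ℝ)) * A * Λ (k + 1) ^ Q := by
          apply mul_le_mul_of_nonneg_right _ hp.le
          apply mul_le_mul_of_nonneg_right _ hA.le
          exact mul_le_mul_of_nonneg_left h2 hc.le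
      _ ≤ Λ k := hrec k hk
  -- main induction
  have key : ∀ n : ℕ, (c * A) ^ ((1 - Q ^ n) / (1 - Q)) * Λ (n + 1) ^ (Q ^ n : ℝ) ≤ Λ 1 := by
    intro n
    induction n with
    | zero =>
        simp [Real.rpow_one]
    | succ n ih =>
        refine le_trans ?_ ih
        have hQn : (0 : ℝ) < Q ^ n := pow_pos hQ0 n
        have hL2 : 0 < Λ (n + 2) := hLpos (n + 2) (by omega)
        have h1 : (c * A * Λ (n + 2) ^ Q) ^ (Q ^ n : ℝ) ≤ Λ (n + 1) ^ (Q ^ n : ℝ) := by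
          apply Real.rpow_le_rpow (by positivity) _ hQn.le
          simpa using hchain (n + 1) (by omega)
        have h2 : (c * A * Λ (n + 2) ^ Q) ^ (Q ^ n : ℝ)
            = (c * A) ^ (Q ^ n : ℝ) * Λ (n + 2) ^ (Q ^ (n + 1) : ℝ) := by
          rw [Real.mul_rpow hcA.le (by positivity), ← Real.rpow_mul hL2.le, ← pow_succ']
        have hexp : (1 - Q ^ (n + 1)) / (1 - Q) = (1 - Q ^ n) / (1 - Q) + Q ^ n := by
          field_simp
          ring
        rw [hexp, Real.rpow_add hcA]
        calc (c * A) ^ ((1 - Q ^ n) / (1 - Q)) * (c * A) ^ (Q ^ n : ℝ)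
              * Λ (n + 1 + 1) ^ (Q ^ (n + 1) : ℝ)
            = (c * A) ^ ((1 - Q ^ n) / (1 - Q))
              * ((c * A) ^ (Q ^ n : ℝ) * Λ (n + 2) ^ (Q ^ (n + 1) : ℝ)) := by ring_nf
          _ = (c * A) ^ ((1 - Q ^ n) / (1 - Q)) * (c * A * Λ (n + 2) ^ Q) ^ (Q ^ n : ℝ) := by
              rw [h2]
          _ ≤ (c * A) ^ ((1 - Q ^ n) / (1 - Q)) * Λ (n + 1) ^ (Q ^ n : ℝ) := by
              apply mul_le_mul_of_nonneg_left h1 (by positivity)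
  -- lower bound with R
  have key2 : ∀ n : ℕ, (c * A) ^ ((1 - Q ^ n) / (1 - Q)) * R ^ (Q ^ n : ℝ) ≤ Λ 1 := by
    intro n
    refine le_trans ?_ (key n)
    apply mul_le_mul_of_nonneg_left _ (by positivity)
    exact Real.rpow_le_rpow hR.le (hlow (n + 1) (by omega)) (by positivity)
  -- take limits
  have hQtend : Filter.Tendsto (fun n : ℕ => Q ^ n) Filter.atTop (nhds 0) :=
    tendsto_pow_atTop_nhds_zero_of_lt_one hQ0.le hQ1
  have htend : Filter.Tendsto
      (fun n : ℕ => (c * A) ^ ((1 - Q ^ n) / (1 - Q)) * R ^ (Q ^ n : ℝ))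
      Filter.atTop (nhds ((c * A) ^ (1 / (1 - Q)))) := by
    have he : Filter.Tendsto (fun n : ℕ => (1 - Q ^ n) / (1 - Q)) Filter.atTop
        (nhds (1 / (1 - Q))) := by
      have := ((tendsto_const_nhds (x := (1:ℝ))).sub hQtend).div_const (1 - Q)
      simpa using this
    have t1 : Filter.Tendsto (fun n : ℕ => (c * A) ^ ((1 - Q ^ n) / (1 - Q)))
        Filter.atTop (nhds ((c * A) ^ (1 / (1 - Q)))) :=
      Filter.Tendsto.rpow tendsto_const_nhds he (Or.inl hcA.ne')
    have t2 : Filter.Tendsto (fun n : ℕ => R ^ (Q ^ n : ℝ)) Filter.atTop (nhds 1) := by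
      have := Filter.Tendsto.rpow (tendsto_const_nhds (x := R)) hQtend (Or.inl hR.ne')
      simpa using this
    simpa using t1.mul t2
  exact le_of_tendsto htend (Filter.Eventually.of_forall key2)
end

section
/- The counterexample is a classical solution (Section 5): Let 1 < p < q, α > 0, c > 0 and set x₀ := c^{−(q−p)/(α(p−1))}. Define a(x) := max{−x, 0}^α and g : ℝ → (0,∞) by g(x) := c^{1/(p−1)} for x ≥ −x₀ and g(x) := (c|x|^{−α})^{1/(q−1)} for x < −x₀. Then max{g(x)^{p−1}, a(x) g(x)^{q−1}} = c for every x ∈ ℝ. Moreover, if in addition α < q−1 and α₂ := 1 − α/(q−1), then for every r > 0 the function u : (−x₀−2r, ∞) → ℝ defined by u(x) := c^{1/(q−1)}((x₀+2r)^{α₂} − |x|^{α₂})/α₂ for x ∈ (−x₀−2r, −x₀] and u(x) := u(−x₀) + (x+x₀) c^{1/(p−1)} for x > −x₀ is nonnegative, increasing and differentiable with u'(x) = g(x) for all x; hence x ↦ max{u'(x)^{p−1}, a(x) u'(x)^{q−1}} is constant equal to c, i.e. u is a classical solution of (φ'(x,u'))' = 0 for φ'(x,t) = max{t^{p−1}, a(x)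 t^{q−1}}. -/
open Set

/-- **Section 5, the counterexample is a classical solution**: for the double phase
weight `a(x) = max{-x,0}^α` and `g` as below, `max{g^{p-1}, a g^{q-1}} ≡ c`; and for
`α < q - 1` the piecewise function `u` is nonnegative, increasing and differentiable on
`(-x₀ - 2r, ∞)` with `u' = g`, hence solves `(φ'(x,u'))' = 0` for
`φ'(x,t) = max{t^{p-1}, a(x) t^{q-1}}`. -/
theorem counterexample_is_solution (p q α c : ℝ) (hp : 1 < p) (hpq : p < q)
    (hα : 0 < α) (hc : 0 < c) (x₀ : ℝ)
    (hx₀ : x₀ = c ^ (-(q - p) / (α * (p - 1)))) (a g : ℝ → ℝ)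
    (ha : ∀ x : ℝ, a x = max (-x) 0 ^ α)
    (hg : ∀ x : ℝ, g x =
      if -x₀ ≤ x then c ^ (1 / (p - 1)) else (c * |x| ^ (-α)) ^ (1 / (q - 1))) :
    (∀ x : ℝ, max (g x ^ (p - 1)) (a x * g x ^ (q - 1)) = c) ∧
    (α < q - 1 → ∀ α₂ r : ℝ, α₂ = 1 - α / (q - 1) → 0 < r →
      ∀ u : ℝ → ℝ,
        (∀ x : ℝ, u x =
          if x ≤ -x₀ then
            c ^ (1 / (q - 1)) * (((x₀ + 2 * r) ^ α₂ - |x| ^ α₂) / α₂)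
          else
            c ^ (1 / (q - 1)) * (((x₀ + 2 * r) ^ α₂ - x₀ ^ α₂) / α₂)
              + (x + x₀) * c ^ (1 / (p - 1))) →
        (∀ x ∈ Ioi (-x₀ - 2 * r), 0 ≤ u x) ∧
        StrictMonoOn u (Ioi (-x₀ - 2 * r)) ∧
        (∀ x ∈ Ioi (-x₀ - 2 * r), HasDerivAt u (g x) x) ∧
        (∀ x ∈ Ioi (-x₀ - 2 * r),
          max (deriv u x ^ (p - 1)) (a x * deriv u x ^ (q - 1)) = c)) := by
  have hp1 : (0:ℝ) < p - 1 := by linarith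
  have hq1 : (0:ℝ) < q - 1 := by linarith
  have hx₀pos : 0 < x₀ := by rw [hx₀]; exact Real.rpow_pos_of_pos hc _
  have hcc : ∀ s t : ℝ, (c ^ s) ^ t = c ^ (s * t) := fun s t => (Real.rpow_mul hc.le s t).symm
  have hca : ∀ s t : ℝ, c ^ s * c ^ t = c ^ (s + t) := fun s t => (Real.rpow_add hc s t).symm
  have hx₀pow : ∀ t : ℝ, x₀ ^ t = c ^ (-(q - p) / (α * (p - 1)) * t) := fun t => by
    rw [hx₀, hcc]
  -- Part 1
  have hmax : ∀ x : ℝ, max (g x ^ (p - 1)) (a x * g x ^ (q - 1)) = c := by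
    intro x
    by_cases hxc : -x₀ ≤ x
    · have hgx : g x = c ^ (1 / (p - 1)) := by rw [hg]; simp [hxc]
      have hgp : g x ^ (p - 1) = c := by
        rw [hgx, hcc, one_div, inv_mul_cancel₀ hp1.ne', Real.rpow_one]
      have hagq : a x * g x ^ (q - 1) ≤ c := by
        have haxle : a x ≤ x₀ ^ α := by
          rw [ha]
          exact Real.rpow_le_rpow (le_max_right _ _) (max_le (by linarith) hx₀pos.le) hα.le
        have hgq : g x ^ (q - 1) = c ^ ((q - 1) / (p - 1)) := by
          rw [hgx, hcc]; congr 1; field_simp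
        have hkey : x₀ ^ α * c ^ ((q - 1) / (p - 1)) = c := by
          rw [hx₀pow, hca,
            show -(q - p) / (α * (p - 1)) * α + (q - 1) / (p - 1) = 1 by
              field_simp; ring,
            Real.rpow_one]
        calc a x * g x ^ (q - 1) ≤ x₀ ^ α * c ^ ((q - 1) / (p - 1)) := by
              rw [hgq]
              exact mul_le_mul_of_nonneg_right haxle (Real.rpow_pos_of_pos hc _).le
          _ = c := hkey
      rw [hgp]; exact max_eq_left hagq
    · push_neg at hxc
      have hxneg : x < 0 := by linarith
      have habs : |x| = -x := abs_of_neg hxneg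
      have habspos : 0 < |x| := by rw [habs]; linarith
      have hx₀le : x₀ ≤ |x| := by rw [habs]; linarith
      have hax : a x = |x| ^ α := by
        rw [ha, habs, max_eq_left (by linarith : (0:ℝ) ≤ -x)]
      have hbase : 0 < c * |x| ^ (-α) := mul_pos hc (Real.rpow_pos_of_pos habspos _)
      have hgx : g x = (c * |x| ^ (-α)) ^ (1 / (q - 1)) := by
        rw [hg]; simp [not_le.mpr hxc]
      have hagq : a x * g x ^ (q - 1) = c := by
        rw [hax, hgx, ← Real.rpow_mul hbase.le, one_div, inv_mul_cancel₀ hq1.ne',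
          Real.rpow_one]
        have h1 : |x| ^ α * |x| ^ (-α) = 1 := by
          rw [← Real.rpow_add habspos]; simp
        calc |x| ^ α * (c * |x| ^ (-α)) = c * (|x| ^ α * |x| ^ (-α)) := by ring
          _ = c := by rw [h1, mul_one]
      have hgp : g x ^ (p - 1) ≤ c := by
        rw [hgx, ← Real.rpow_mul hbase.le,
          Real.mul_rpow hc.le (Real.rpow_pos_of_pos habspos _).le,
          ← Real.rpow_mul habspos.le]
        have h1 : |x| ^ (-α * (1 / (q - 1) * (p - 1))) ≤ x₀ ^ (-α * (1 / (q - 1) * (p - 1))) := by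
          apply Real.rpow_le_rpow_of_nonpos hx₀pos hx₀le
          have : 0 < 1 / (q - 1) * (p - 1) := by positivity
          nlinarith
        calc c ^ (1 / (q - 1) * (p - 1)) * |x| ^ (-α * (1 / (q - 1) * (p - 1)))
            ≤ c ^ (1 / (q - 1) * (p - 1)) * x₀ ^ (-α * (1 / (q - 1) * (p - 1))) :=
              mul_le_mul_of_nonneg_left h1 (Real.rpow_pos_of_pos hc _).le
          _ = c := by
              rw [hx₀pow, hca,
                show 1 / (q - 1) * (p - 1) +
                    -(q - p) / (α * (p - 1)) * (-α * (1 / (q - 1) * (p - 1))) = 1 by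
                  field_simp; ring,
                Real.rpow_one]
      rw [hagq]; exact max_eq_right hgp
  refine ⟨hmax, ?_⟩
  intro hαq α₂ r hα₂ hr u hu
  have hα₂pos : 0 < α₂ := by
    rw [hα₂]
    have : α / (q - 1) < 1 := (div_lt_one hq1).mpr (by linarith)
    linarith
  set X : ℝ := x₀ + 2 * r with hX
  have hXpos : 0 < X := by simp only [hX]; linarith
  set C : ℝ := c ^ (1 / (q - 1)) with hC
  have hCpos : 0 < C := Real.rpow_pos_of_pos hc _
  set K : ℝ := C * ((X ^ α₂ - x₀ ^ α₂) / α₂) with hK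
  -- the two smooth pieces
  have hFderiv : ∀ x : ℝ, x < 0 →
      HasDerivAt (fun y => C * ((X ^ α₂ - (-y) ^ α₂) / α₂)) (C * (-x) ^ (α₂ - 1)) x := by
    intro x hx
    have h2 : HasDerivAt (fun y : ℝ => y ^ α₂) (α₂ * (-x) ^ (α₂ - 1)) (-x) :=
      Real.hasDerivAt_rpow_const (Or.inl (by linarith : -x ≠ 0))
    have h3 : HasDerivAt (fun y : ℝ => (-y) ^ α₂) (α₂ * (-x) ^ (α₂ - 1) * (-1)) x :=
      h2.comp x (hasDerivAt_neg x)
    have h4 := ((h3.const_mul (C / α₂)).const_sub (C * X ^ α₂ / α₂))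
    have h5 : HasDerivAt (fun y : ℝ => C * X ^ α₂ / α₂ - C / α₂ * (-y) ^ α₂)
        (C * (-x) ^ (α₂ - 1)) x := by
      refine h4.congr_deriv ?_
      field_simp
    apply h5.congr_of_eventuallyEq
    filter_upwards with y
    field_simp
  have hGderiv : ∀ x : ℝ,
      HasDerivAt (fun y => K + (y + x₀) * c ^ (1 / (p - 1))) (c ^ (1 / (p - 1))) x := by
    intro x
    have h1 := (((hasDerivAt_id x).add_const x₀).mul_const (c ^ (1 / (p - 1)))).const_add K
    simpa using h1
  -- junction
  have hjunction : C * x₀ ^ (α₂ - 1) = c ^ (1 / (p - 1)) := by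
    rw [hC, hx₀pow, hca]
    congr 1
    rw [hα₂]
    field_simp
    ring
  -- values of u
  have huleft : ∀ x : ℝ, x ≤ -x₀ → u x = C * ((X ^ α₂ - (-x) ^ α₂) / α₂) := by
    intro x hx
    rw [hu, if_pos hx, abs_of_neg (by linarith : x < 0)]
  have huright : ∀ x : ℝ, -x₀ ≤ x → u x = K + (x + x₀) * c ^ (1 / (p - 1)) := by
    intro x hx
    rcases eq_or_lt_of_le hx with h | h
    · rw [hu, if_pos (le_of_eq h.symm), ← h, abs_of_neg (by linarith : -x₀ < (0:ℝ)), neg_neg]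
      simp [hK]
    · rw [hu, if_neg (by linarith)]
  -- values of g
  have hgleft : ∀ x : ℝ, x < -x₀ → g x = C * (-x) ^ (α₂ - 1) := by
    intro x hx
    have hxneg : x < 0 := by linarith
    have habs : |x| = -x := abs_of_neg hxneg
    have habspos : 0 < -x := by linarith
    rw [hg, if_neg (by linarith), habs, hC,
      Real.mul_rpow hc.le (Real.rpow_pos_of_pos habspos _).le,
      ← Real.rpow_mul habspos.le]
    congr 1
    rw [hα₂]
    field_simp
    congr 1
    ring
  have hgright : ∀ x : ℝ, -x₀ ≤ x → g x = c ^ (1 / (p - 1)) := by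
    intro x hx; rw [hg, if_pos hx]
  have hgpos : ∀ x : ℝ, x ∈ Ioi (-x₀ - 2 * r) → 0 < g x := by
    intro x _
    by_cases hx : -x₀ ≤ x
    · rw [hgright x hx]; exact Real.rpow_pos_of_pos hc _
    · push_neg at hx
      rw [hgleft x hx]
      exact mul_pos hCpos (Real.rpow_pos_of_pos (by linarith) _)
  -- derivative
  have hderiv : ∀ x ∈ Ioi (-x₀ - 2 * r), HasDerivAt u (g x) x := by
    intro x _
    rcases lt_trichotomy x (-x₀) with h | h | h
    · rw [hgleft x h]
      apply (hFderiv x (by linarith)).congr_of_eventuallyEq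
      filter_upwards [Iio_mem_nhds h] with y hy
      exact huleft y (le_of_lt hy)
    · subst h
      rw [hgright _ le_rfl]
      have hL : HasDerivWithinAt u (c ^ (1 / (p - 1))) (Iic (-x₀)) (-x₀) := by
        have hF := hFderiv (-x₀) (by linarith)
        rw [neg_neg] at hF
        rw [hjunction] at hF
        exact hF.hasDerivWithinAt.congr (fun y hy => huleft y hy) (huleft _ le_rfl)
      have hR : HasDerivWithinAt u (c ^ (1 / (p - 1))) (Ici (-x₀)) (-x₀) := by
        exact (hGderiv (-x₀)).hasDerivWithinAt.congr (fun y hy => huright y hy)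
          (huright _ le_rfl)
      have := hL.union hR
      rw [Iic_union_Ici] at this
      exact this.hasDerivAt (by simp)
    · rw [hgright x (le_of_lt h)]
      apply (hGderiv x).congr_of_eventuallyEq
      filter_upwards [Ioi_mem_nhds h] with y hy
      exact huright y (le_of_lt hy)
  refine ⟨?_, ?_, hderiv, ?_⟩
  · -- nonnegativity
    intro x hx
    simp only [mem_Ioi] at hx
    by_cases hxle : x ≤ -x₀
    · rw [huleft x hxle]
      have h1 : (-x) ^ α₂ ≤ X ^ α₂ :=
        Real.rpow_le_rpow (by linarith) (by simp only [hX]; linarith) hα₂pos.le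
      have : 0 ≤ (X ^ α₂ - (-x) ^ α₂) / α₂ := div_nonneg (by linarith) hα₂pos.le
      positivity
    · push_neg at hxle
      rw [huright x hxle.le]
      have h1 : x₀ ^ α₂ ≤ X ^ α₂ :=
        Real.rpow_le_rpow hx₀pos.le (by simp only [hX]; linarith) hα₂pos.le
      have h2 : 0 ≤ K := by
        rw [hK]
        have : 0 ≤ (X ^ α₂ - x₀ ^ α₂) / α₂ := div_nonneg (by linarith) hα₂pos.le
        positivity
      have h3 : 0 ≤ (x + x₀) * c ^ (1 / (p - 1)) :=
        mul_nonneg (by linarith) (Real.rpow_pos_of_pos hc _).le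
      linarith
  · -- strict monotonicity
    apply strictMonoOn_of_deriv_pos (convex_Ioi _)
    · exact fun x hx => ((hderiv x hx).differentiableAt.continuousAt).continuousWithinAt
    · intro x hx
      rw [interior_Ioi] at hx
      rw [(hderiv x hx).deriv]
      exact hgpos x hx
  · intro x hx
    rw [(hderiv x hx).deriv]
    exact hmax x
end

section
/- Harnack quotient identity for the counterexample (Section 5): Let 1 < p < q, 0 < α < q−1, α₂ := 1 − α/(q−1), c > 0, x₀ := c^{−(q−p)/(α(p−1))} and r > 0. Let u be defined on (−x₀−2r, ∞) by u(x) := c^{1/(q−1)}((x₀+2r)^{α₂} − |x|^{α₂})/α₂ for x ∈ (−x₀−2r, −x₀] and u(x) := u(−x₀) + (x+x₀) c^{1/(p−1)} for x > −x₀. Then u(−x₀+r)/u(−x₀) = 1 + α₂ (r/x₀) / ((1 + 2r/x₀)^{α₂} − 1). -/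
open Set

/-- **Section 5, Harnack quotient identity for the counterexample**:
`u(-x₀+r)/u(-x₀) = 1 + α₂ (r/x₀)/((1 + 2r/x₀)^{α₂} - 1)`. -/
theorem counterexample_harnack_quotient (p q α c r : ℝ) (hp : 1 < p) (hpq : p < q)
    (hα : 0 < α) (hαq : α < q - 1) (hc : 0 < c) (hr : 0 < r) (α₂ x₀ : ℝ)
    (hα₂ : α₂ = 1 - α / (q - 1)) (hx₀ : x₀ = c ^ (-(q - p) / (α * (p - 1))))
    (u : ℝ → ℝ)
    (hu : ∀ x : ℝ, u x =
      if x ≤ -x₀ then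
        c ^ (1 / (q - 1)) * (((x₀ + 2 * r) ^ α₂ - |x| ^ α₂) / α₂)
      else
        c ^ (1 / (q - 1)) * (((x₀ + 2 * r) ^ α₂ - x₀ ^ α₂) / α₂)
          + (x + x₀) * c ^ (1 / (p - 1))) :
    u (-x₀ + r) / u (-x₀)
      = 1 + α₂ * (r / x₀) / ((1 + 2 * r / x₀) ^ α₂ - 1) := by
  have hq1 : 0 < q - 1 := by linarith
  have hp1 : 0 < p - 1 := by linarith
  have hα₂pos : 0 < α₂ := by
    rw [hα₂, sub_pos, div_lt_one hq1]; exact hαq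
  have hx₀pos : 0 < x₀ := hx₀ ▸ Real.rpow_pos_of_pos hc _
  have hDgt : x₀ ^ α₂ < (x₀ + 2 * r) ^ α₂ :=
    Real.rpow_lt_rpow hx₀pos.le (by linarith) hα₂pos
  have hDpos : 0 < (x₀ + 2 * r) ^ α₂ - x₀ ^ α₂ := by linarith
  have hApos : 0 < c ^ (1 / (q - 1)) := Real.rpow_pos_of_pos hc _
  have hXpos : 0 < x₀ ^ α₂ := Real.rpow_pos_of_pos hx₀pos _
  -- key exponent identity
  have hkey : c ^ (1 / (p - 1)) = c ^ (1 / (q - 1)) * x₀ ^ (α₂ - 1) := by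
    rw [hx₀, ← Real.rpow_mul hc.le, ← Real.rpow_add hc]
    congr 1
    rw [hα₂]
    field_simp
    ring
  have hpow : x₀ ^ (α₂ - 1) = x₀ ^ α₂ / x₀ := by
    rw [Real.rpow_sub hx₀pos, Real.rpow_one]
  have h1 : u (-x₀) = c ^ (1 / (q - 1)) * (((x₀ + 2 * r) ^ α₂ - x₀ ^ α₂) / α₂) := by
    rw [hu, if_pos le_rfl, abs_neg, abs_of_pos hx₀pos]
  have h2 : u (-x₀ + r) = c ^ (1 / (q - 1)) * (((x₀ + 2 * r) ^ α₂ - x₀ ^ α₂) / α₂)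
      + r * c ^ (1 / (p - 1)) := by
    rw [hu, if_neg (by linarith)]; ring_nf
  have h3 : (1 + 2 * r / x₀ : ℝ) ^ α₂ = (x₀ + 2 * r) ^ α₂ / x₀ ^ α₂ := by
    rw [show (1 + 2 * r / x₀ : ℝ) = (x₀ + 2 * r) / x₀ by field_simp,
      Real.div_rpow (by linarith) hx₀pos.le]
  have hRden : (x₀ + 2 * r) ^ α₂ / x₀ ^ α₂ - 1 ≠ 0 := by
    have : 1 < (x₀ + 2 * r) ^ α₂ / x₀ ^ α₂ := (one_lt_div hXpos).2 hDgt
    linarith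
  rw [h1, h2, h3, hkey, hpow]
  field_simp
end

section
/- (A1-s_*) for the double phase functional (proof of Corollary 5.1): Let 1 < p ≤ q, α ∈ (0,1], s ∈ (0,∞], and set s_* := ns/(n+s) (with s_* := n when s = ∞). Suppose a : ℝⁿ → [0,∞) satisfies |a(x) − a(y)| ≤ c_a |x−y|^α for all x, y, and suppose α ≥ (n/s + 1)(q−p). Then there exists a constant C ≥ 1, depending only on c_a, n, α, s and q−p, such that for every ball B ⊂ ℝⁿ with |B| ≤ 1, all x, y ∈ B, and every t with 1 ≤ t ≤ |B|^{−1/s_*}, one has t^p + a(x) t^q ≤ C (t^p + a(y) t^q). In particular, the double phase functional φ(x,t) := t^p + a(x)t^q satisfies (A1-s_*). -/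
open Set MeasureTheory Metric
open scoped ENNReal

set_option maxHeartbeats 1000000

/-- **Proof of Corollary 5.1, (A1-s_*) for the double phase functional**: if `a ≥ 0` is
`α`-Hölder with constant `c_a` and `α ≥ (n/s + 1)(q - p)`, then for every ball `B` with
`|B| ≤ 1` and `1 ≤ t ≤ |B|^{-1/s_*}` (where `s_* = ns/(n+s)`, and `s_* = n`, `n/s = 0`
for `s = ∞`) the double phase functional `t^p + a(x) t^q` is comparable at any two points
of `B`, with a constant depending only on `c_a, n, α, s, q - p`; in particular it
satisfies (A1-s_*). -/
theorem double_phase_A1sStar (n : ℕ) (hn : 0 < n) (p q α c_a : ℝ) (s : ℝ≥0∞)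
    (hp : 1 < p) (hpq : p ≤ q) (hα : α ∈ Ioc (0:ℝ) 1) (hca : 0 ≤ c_a) (hs : 0 < s)
    (hαs : ((if s = ⊤ then (0:ℝ) else (n : ℝ) / s.toReal) + 1) * (q - p) ≤ α) :
    ∃ C : ℝ, 1 ≤ C ∧
      ∀ a : EuclideanSpace ℝ (Fin n) → ℝ,
        (∀ x, 0 ≤ a x) →
        (∀ x y, |a x - a y| ≤ c_a * ‖x - y‖ ^ α) →
        ∀ (z : EuclideanSpace ℝ (Fin n)) (r : ℝ), 0 < r →
          (volume (ball z r)).toReal ≤ 1 →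
          ∀ x ∈ ball z r, ∀ y ∈ ball z r, ∀ t : ℝ,
            1 ≤ t →
            t ≤ (volume (ball z r)).toReal ^
              (-(1 / (if s = ⊤ then (n : ℝ)
                      else (n : ℝ) * s.toReal / ((n : ℝ) + s.toReal)))) →
            t ^ p + a x * t ^ q ≤ C * (t ^ p + a y * t ^ q) := by
  have hn' : (0:ℝ) < n := by exact_mod_cast hn
  haveI : Nontrivial (EuclideanSpace ℝ (Fin n)) := by
    first
    | exact FiniteDimensional.nontrivial_of_finrank_pos
        (by rw [finrank_euclideanSpace_fin]; exact hn)
    | exact Module.nontrivial_of_finrank_pos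
        (by rw [finrank_euclideanSpace_fin]; exact hn)
    | exact FiniteDimensional.finrank_pos_iff.mp
        (by rw [finrank_euclideanSpace_fin]; exact hn)
    | exact Module.finrank_pos_iff.mp
        (by rw [finrank_euclideanSpace_fin]; exact hn)
    | · have : Nonempty (Fin n) := Fin.pos_iff_nonempty.mp hn
        infer_instance
  set σ : ℝ := if s = ⊤ then (n : ℝ) else (n : ℝ) * s.toReal / ((n : ℝ) + s.toReal)
    with hσdef
  have hσ : 0 < σ := by
    rw [hσdef]
    split
    · exact hn'
    · next h =>
      have hst : 0 < s.toReal := ENNReal.toReal_pos hs.ne' h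
      positivity
  have hqp : 0 ≤ q - p := sub_nonneg.2 hpq
  have hkey : (n:ℝ) * (q - p) / σ ≤ α := by
    by_cases h : s = ⊤
    · simp only [h, if_true] at hαs hσdef
      rw [hσdef]
      have heq : (n:ℝ) * (q - p) / (n:ℝ) = q - p := by
        rw [mul_comm, mul_div_assoc, div_self hn'.ne', mul_one]
      rw [heq]
      linarith
    · have hst : 0 < s.toReal := ENNReal.toReal_pos hs.ne' h
      simp only [h, if_false] at hαs hσdef
      rw [hσdef]
      have heq : (n:ℝ) * (q - p) / ((n : ℝ) * s.toReal / ((n : ℝ) + s.toReal))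
          = ((n:ℝ)/s.toReal + 1) * (q - p) := by
        field_simp
      rw [heq]
      exact hαs
  set ω : ℝ := (volume (ball (0 : EuclideanSpace ℝ (Fin n)) 1)).toReal with hωdef
  have hωpos : 0 < ω :=
    ENNReal.toReal_pos (measure_ball_pos volume 0 one_pos).ne' measure_ball_lt_top.ne
  set R : ℝ := max 1 (ω⁻¹ ^ ((1:ℝ)/n)) with hRdef
  have hR1 : (1:ℝ) ≤ R := le_max_left _ _
  set K : ℝ := c_a * 2 ^ α * ω ^ (-((q-p)/σ)) * R with hKdef
  have hK0 : 0 ≤ K := by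
    have h1 : (0:ℝ) ≤ 2 ^ α := Real.rpow_nonneg (by norm_num) _
    have h2 : (0:ℝ) ≤ ω ^ (-((q-p)/σ)) := Real.rpow_nonneg hωpos.le _
    positivity
  refine ⟨1 + K, by linarith, ?_⟩
  intro a ha0 haH z r hr hV x hx y hy t ht ht'
  have htpos : (0:ℝ) < t := lt_of_lt_of_le one_pos ht
  -- volume formula
  have hVol : (volume (ball z r)).toReal = ω * r ^ ((n:ℕ):ℝ) := by
    rw [Measure.addHaar_ball volume z hr.le, ENNReal.toReal_mul,
      ENNReal.toReal_ofReal (by positivity), finrank_euclideanSpace_fin,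
      Real.rpow_natCast, hωdef]
    ring
  rw [hVol] at hV ht'
  have hrn1 : r ^ ((n:ℕ):ℝ) ≤ ω⁻¹ := by
    calc r ^ ((n:ℕ):ℝ) = ω⁻¹ * (ω * r ^ ((n:ℕ):ℝ)) := by
          field_simp
        _ ≤ ω⁻¹ * 1 := mul_le_mul_of_nonneg_left hV (inv_pos.2 hωpos).le
        _ = ω⁻¹ := mul_one _
  have hrR : r ≤ R := by
    have h := Real.rpow_le_rpow (by positivity) hrn1
      (by positivity : (0:ℝ) ≤ 1 / (n:ℝ))
    rw [← Real.rpow_mul hr.le, mul_one_div, div_self hn'.ne', Real.rpow_one] at h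
    exact h.trans (le_max_right _ _)
  -- the exponent e = α - n(q-p)/σ lies in [0, 1]
  have he0 : 0 ≤ α - (n:ℝ)*(q-p)/σ := by linarith
  have he1 : α - (n:ℝ)*(q-p)/σ ≤ 1 := by
    have h0 : 0 ≤ (n:ℝ)*(q-p)/σ := by positivity
    linarith [hα.2]
  have hre : r ^ (α - (n:ℝ)*(q-p)/σ) ≤ R := by
    rcases le_or_gt r 1 with h | h
    · exact (Real.rpow_le_one hr.le h he0).trans hR1
    · calc r ^ (α - (n:ℝ)*(q-p)/σ) ≤ r ^ (1:ℝ) :=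
            Real.rpow_le_rpow_of_exponent_le h.le he1
        _ = r := Real.rpow_one r
        _ ≤ R := hrR
  -- bound on t^(q-p)
  have ht2 : t ^ (q-p) ≤ ω ^ (-((q-p)/σ)) * r ^ (-((n:ℝ)*(q-p)/σ)) := by
    calc t ^ (q-p) ≤ ((ω * r ^ ((n:ℕ):ℝ)) ^ (-(1/σ))) ^ (q-p) :=
          Real.rpow_le_rpow htpos.le ht' hqp
      _ = (ω * r ^ ((n:ℕ):ℝ)) ^ (-(1/σ) * (q-p)) :=
          (Real.rpow_mul (by positivity) _ _).symm
      _ = ω ^ (-(1/σ) * (q-p)) * (r ^ ((n:ℕ):ℝ)) ^ (-(1/σ) * (q-p)) :=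
          Real.mul_rpow hωpos.le (by positivity)
      _ = ω ^ (-((q-p)/σ)) * r ^ (-((n:ℝ)*(q-p)/σ)) := by
          rw [← Real.rpow_mul hr.le,
            show -(1/σ) * (q-p) = -((q-p)/σ) from by ring,
            show ((n:ℕ):ℝ) * -((q-p)/σ) = -((n:ℝ)*(q-p)/σ) from by push_cast; ring]
  -- key bound
  have h2r : ((2*r):ℝ) ^ α = 2 ^ α * r ^ α := Real.mul_rpow (by norm_num) hr.le
  have hcomb : r ^ α * r ^ (-((n:ℝ)*(q-p)/σ)) = r ^ (α - (n:ℝ)*(q-p)/σ) := by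
    rw [← Real.rpow_add hr,
      show α + -((n:ℝ)*(q-p)/σ) = α - (n:ℝ)*(q-p)/σ from by ring]
  have hc2r : (0:ℝ) ≤ c_a * (2*r) ^ α := by
    have : (0:ℝ) ≤ (2*r) ^ α := Real.rpow_nonneg (by positivity) _
    positivity
  have hmain : c_a * (2*r) ^ α * t ^ (q-p) ≤ K := by
    calc c_a * (2*r) ^ α * t ^ (q-p)
        ≤ c_a * (2*r) ^ α * (ω ^ (-((q-p)/σ)) * r ^ (-((n:ℝ)*(q-p)/σ))) :=
          mul_le_mul_of_nonneg_left ht2 hc2r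
      _ = c_a * 2 ^ α * ω ^ (-((q-p)/σ)) * (r ^ α * r ^ (-((n:ℝ)*(q-p)/σ))) := by
          rw [h2r]; ring
      _ = c_a * 2 ^ α * ω ^ (-((q-p)/σ)) * r ^ (α - (n:ℝ)*(q-p)/σ) := by rw [hcomb]
      _ ≤ c_a * 2 ^ α * ω ^ (-((q-p)/σ)) * R := by
          apply mul_le_mul_of_nonneg_left hre
          have h1 : (0:ℝ) ≤ 2 ^ α := Real.rpow_nonneg (by norm_num) _
          have h2 : (0:ℝ) ≤ ω ^ (-((q-p)/σ)) := Real.rpow_nonneg hωpos.le _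
          positivity
      _ = K := rfl
  -- Hölder comparison of a at x and y
  have hxy : a x ≤ a y + c_a * (2*r) ^ α := by
    have hd : ‖x - y‖ ≤ 2 * r := by
      have h1 : dist x z < r := mem_ball.mp hx
      have h2 : dist y z < r := mem_ball.mp hy
      have h3 : dist x y ≤ dist x z + dist z y := dist_triangle x z y
      rw [dist_comm z y] at h3
      rw [← dist_eq_norm]
      linarith
    have h3 := haH x y
    have h4 : c_a * ‖x - y‖ ^ α ≤ c_a * (2*r) ^ α :=
      mul_le_mul_of_nonneg_left (Real.rpow_le_rpow (norm_nonneg _) hd hα.1.le) hca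
    have h5 : a x - a y ≤ |a x - a y| := le_abs_self _
    linarith
  have htq : t ^ q = t ^ (q-p) * t ^ p := by
    rw [← Real.rpow_add htpos, sub_add_cancel]
  have htq0 : (0:ℝ) ≤ t ^ q := Real.rpow_nonneg htpos.le q
  have htp0 : (0:ℝ) ≤ t ^ p := Real.rpow_nonneg htpos.le p
  calc t ^ p + a x * t ^ q
      ≤ t ^ p + (a y + c_a * (2*r) ^ α) * t ^ q := by nlinarith [hxy, htq0]
    _ = t ^ p + a y * t ^ q + (c_a * (2*r) ^ α * t ^ (q-p)) * t ^ p := by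
        rw [htq]; ring
    _ ≤ t ^ p + a y * t ^ q + K * t ^ p := by nlinarith [hmain, htp0]
    _ ≤ (1 + K) * (t ^ p + a y * t ^ q) := by
        nlinarith [mul_nonneg hK0 (mul_nonneg (ha0 y) htq0), htp0, hK0]
end
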